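/- Let ρ : C → ℝ³ be a smooth map on a cylinder C = S¹ × [a,b] with coordinates (θ, t). Suppose ∫_C |ρ_θ|² ≤ (1/10) ∫_C |∇ρ|², where |∇ρ|² = |ρ_t|² + |ρ_θ|². Then the energy-area gap satisfies E(ρ) − Area(ρ) ≥ (1/8) ∫_C (|ρ_t|² − |ρ_θ|²), where E(ρ) = ½∫_C (|ρ_t|² + |ρ_θ|²) and Area(ρ) = ∫_C |ρ_t × ρ_θ|. In particular, E(ρ) − Area(ρ) ≥ (1/8)·(8/10)·∫_C |∇ρ|² − (1/4)∫_C|ρ_θ|² > 0 whenever ∫_C |∇ρ|² > 0. -/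

import Mathlib

set_option maxHeartbeats 1000000


open MeasureTheory Real
open scoped RealInnerProductSpace

noncomputable section

/-- `ρ_θ`, the partial derivative in the first (angular) coordinate. -/
def dTheta (ρ : ℝ × ℝ → EuclideanSpace ℝ (Fin 3)) (p : ℝ × ℝ) : EuclideanSpace ℝ (Fin 3) :=
  fderiv ℝ ρ p (1, 0)

/-- `ρ_t`, the partial derivative in the second coordinate. -/
def dT (ρ : ℝ × ℝ → EuclideanSpace ℝ (Fin 3)) (p : ℝ × ℝ) : EuclideanSpace ℝ (Fin 3) :=
  fderiv ℝ ρ p (0, 1)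

/-- `|ρ_t × ρ_θ|`, computed via the Lagrange identity
`|a × b|² = |a|²|b|² − ⟪a,b⟫²`. -/
def crossNorm (ρ : ℝ × ℝ → EuclideanSpace ℝ (Fin 3)) (p : ℝ × ℝ) : ℝ :=
  Real.sqrt (‖dT ρ p‖ ^ 2 * ‖dTheta ρ p‖ ^ 2 - ⟪dT ρ p, dTheta ρ p⟫ ^ 2)

/- STATEMENT 4: on the cylinder C = S¹ × [a,b], if ∫|ρ_θ|² ≤ (1/10)∫|∇ρ|² then
E(ρ) − Area(ρ) ≥ (1/8)∫(|ρ_t|² − |ρ_θ|²); in particular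
E − Area ≥ (1/8)(8/10)∫|∇ρ|² − (1/4)∫|ρ_θ|², which is positive whenever
∫|∇ρ|² > 0. -/
theorem energy_area_gap_on_cylinder (a b : ℝ) (hab : a ≤ b)
    (ρ : ℝ × ℝ → EuclideanSpace ℝ (Fin 3)) (hρ : ContDiff ℝ 1 ρ)
    (hper : ∀ θ t, ρ (θ + 2 * π, t) = ρ (θ, t))
    (C : Set (ℝ × ℝ)) (hC : C = Set.Ioc (0:ℝ) (2 * π) ×ˢ Set.Icc a b)
    (hsmall : (∫ p in C, ‖dTheta ρ p‖ ^ 2) ≤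
      (1 / 10) * ∫ p in C, (‖dT ρ p‖ ^ 2 + ‖dTheta ρ p‖ ^ 2)) :
    (1 / 8) * (∫ p in C, (‖dT ρ p‖ ^ 2 - ‖dTheta ρ p‖ ^ 2)) ≤
      (1 / 2) * (∫ p in C, (‖dT ρ p‖ ^ 2 + ‖dTheta ρ p‖ ^ 2)) - ∫ p in C, crossNorm ρ p ∧
    ((0 < ∫ p in C, (‖dT ρ p‖ ^ 2 + ‖dTheta ρ p‖ ^ 2)) →
      0 < (1 / 2) * (∫ p in C, (‖dT ρ p‖ ^ 2 + ‖dTheta ρ p‖ ^ 2))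
        - ∫ p in C, crossNorm ρ p) := by

  have hfd : Continuous (fderiv ℝ ρ) := (hρ.continuous_fderiv one_ne_zero)
  have hTc : Continuous (dT ρ) := hfd.clm_apply continuous_const
  have hθc : Continuous (dTheta ρ) := hfd.clm_apply continuous_const
  have hfc : Continuous (fun p => ‖dT ρ p‖ ^ 2) := (hTc.norm.pow 2)
  have hgc : Continuous (fun p => ‖dTheta ρ p‖ ^ 2) := (hθc.norm.pow 2)
  have hXc : Continuous (crossNorm ρ) := by
    unfold crossNorm
    exact (hfc.mul hgc |>.sub ((hTc.inner hθc).pow 2)).sqrt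
  have hK : IsCompact ((Set.Icc (0:ℝ) (2 * π)) ×ˢ Set.Icc a b) :=
    isCompact_Icc.prod isCompact_Icc
  have hsub : C ⊆ (Set.Icc (0:ℝ) (2 * π)) ×ˢ Set.Icc a b := by
    rw [hC]; exact Set.prod_mono Set.Ioc_subset_Icc_self subset_rfl
  have hIf : IntegrableOn (fun p => ‖dT ρ p‖ ^ 2) C volume :=
    (hfc.continuousOn.integrableOn_compact hK).mono_set hsub
  have hIg : IntegrableOn (fun p => ‖dTheta ρ p‖ ^ 2) C volume :=
    (hgc.continuousOn.integrableOn_compact hK).mono_set hsub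
  have hIX : IntegrableOn (crossNorm ρ) C volume :=
    (hXc.continuousOn.integrableOn_compact hK).mono_set hsub
  set A := ∫ p in C, ‖dT ρ p‖ ^ 2 with hA
  set B := ∫ p in C, ‖dTheta ρ p‖ ^ 2 with hB
  set X := ∫ p in C, crossNorm ρ p with hX
  have hsum : (∫ p in C, (‖dT ρ p‖ ^ 2 + ‖dTheta ρ p‖ ^ 2)) = A + B :=
    integral_add hIf hIg
  have hdiff : (∫ p in C, (‖dT ρ p‖ ^ 2 - ‖dTheta ρ p‖ ^ 2)) = A - B :=
    integral_sub hIf hIg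
  have hA0 : 0 ≤ A := integral_nonneg fun p => sq_nonneg _
  have hB0 : 0 ≤ B := integral_nonneg fun p => sq_nonneg _
  have h9 : 9 * B ≤ A := by
    rw [hsum] at hsmall; linarith
  have hXle : X ≤ A / 4 + B := by
    have hle : ∀ p, crossNorm ρ p ≤ ‖dT ρ p‖ ^ 2 / 4 + ‖dTheta ρ p‖ ^ 2 := by
      intro p
      have h1 : crossNorm ρ p ≤ ‖dT ρ p‖ * ‖dTheta ρ p‖ := by
        unfold crossNorm
        have : Real.sqrt (‖dT ρ p‖ ^ 2 * ‖dTheta ρ p‖ ^ 2 - ⟪dT ρ p, dTheta ρ p⟫ ^ 2)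
            ≤ Real.sqrt (‖dT ρ p‖ ^ 2 * ‖dTheta ρ p‖ ^ 2) := by
          apply Real.sqrt_le_sqrt
          nlinarith [sq_nonneg (⟪dT ρ p, dTheta ρ p⟫)]
        refine this.trans ?_
        rw [show ‖dT ρ p‖ ^ 2 * ‖dTheta ρ p‖ ^ 2 = (‖dT ρ p‖ * ‖dTheta ρ p‖) ^ 2 by ring]
        rw [Real.sqrt_sq (by positivity)]
      nlinarith [norm_nonneg (dT ρ p), norm_nonneg (dTheta ρ p),
        sq_nonneg (‖dT ρ p‖ / 2 - ‖dTheta ρ p‖)]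
    calc X ≤ ∫ p in C, (‖dT ρ p‖ ^ 2 / 4 + ‖dTheta ρ p‖ ^ 2) :=
          by
          have hI2 : IntegrableOn (fun p => ‖dT ρ p‖ ^ 2 / 4 + ‖dTheta ρ p‖ ^ 2) C volume :=
            (hIf.div_const 4).add hIg
          exact setIntegral_mono hIX hI2 hle
      _ = A / 4 + B := by
          rw [integral_add (hIf.div_const 4) hIg, integral_div]
  constructor
  · rw [hsum, hdiff]; linarith
  · intro hpos
    rw [hsum] at hpos ⊢
    linarith

end
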